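/- The per-service allocation function f_s(w) = d_s / (δ·W·log(1 + SINR_s(w))), where SINR_s(w) = p_s / ([Ṽᵀ diag(w) p]_s + σ̃_s) with Ṽ nonnegative, p positive, σ̃ positive, and d_s > 0, is a standard interference function of w: it is monotone increasing and scalable (α·f_s(w) > f_s(αw) for α > 1). -/

import Mathlib

open Finset

/-- The per-service resource allocation function
f_s(w) = d_s / (δ·W·log(1 + SINR_s(w))) is a standard interference function:
monotone and scalable. -/
theorem allocation_is_sif {S : ℕ} (V : Matrix (Fin S) (Fin S) ℝ)
    (p σ d : Fin S → ℝ) (δ W : ℝ)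
    (hV : ∀ l s, 0 ≤ V l s) (hp : ∀ s, 0 < p s) (hσ : ∀ s, 0 < σ s)
    (hd : ∀ s, 0 < d s) (hδ : 0 < δ) (hW : 0 < W) :
    let SINR : (Fin S → ℝ) → Fin S → ℝ :=
      fun w s => p s / ((∑ l, V l s * p l * w l) + σ s)
    let f : (Fin S → ℝ) → Fin S → ℝ :=
      fun w s => d s / (δ * W * Real.log (1 + SINR w s))
    (∀ w w' : Fin S → ℝ, 0 ≤ w → w ≤ w' → ∀ s, f w s ≤ f w' s) ∧
    (∀ α : ℝ, 1 < α → ∀ w : Fin S → ℝ, 0 ≤ w → ∀ s, f (α • w) s < α * f w s) := by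
  intro SINR f
  have hsum : ∀ (w : Fin S → ℝ), 0 ≤ w → ∀ s, 0 ≤ ∑ l, V l s * p l * w l := by
    intro w hw s
    exact Finset.sum_nonneg fun l _ =>
      mul_nonneg (mul_nonneg (hV l s) (hp l).le) (hw l)
  have hden : ∀ (w : Fin S → ℝ), 0 ≤ w → ∀ s,
      0 < (∑ l, V l s * p l * w l) + σ s := by
    intro w hw s; exact add_pos_of_nonneg_of_pos (hsum w hw s) (hσ s)
  have hSINR : ∀ (w : Fin S → ℝ), 0 ≤ w → ∀ s, 0 < SINR w s := by
    intro w hw s; exact div_pos (hp s) (hden w hw s)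
  have hlog : ∀ (w : Fin S → ℝ), 0 ≤ w → ∀ s, 0 < Real.log (1 + SINR w s) := by
    intro w hw s
    exact Real.log_pos (by linarith [hSINR w hw s])
  constructor
  · intro w w' hw hww' s
    have hw' : 0 ≤ w' := le_trans hw hww'
    have hdle : (∑ l, V l s * p l * w l) + σ s ≤ (∑ l, V l s * p l * w' l) + σ s := by
      apply add_le_add_left
      apply Finset.sum_le_sum
      intro l _
      exact mul_le_mul_of_nonneg_left (hww' l) (mul_nonneg (hV l s) (hp l).le)
    have hS : SINR w' s ≤ SINR w s :=
      div_le_div_of_nonneg_left (hp s).le (hden w hw s) hdle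
    have hL : Real.log (1 + SINR w' s) ≤ Real.log (1 + SINR w s) := by
      apply Real.log_le_log (by linarith [hSINR w' hw' s]) (by linarith)
    exact div_le_div_of_nonneg_left (hd s).le
      (mul_pos (mul_pos hδ hW) (hlog w' hw' s))
      (by nlinarith [hlog w' hw' s, mul_pos hδ hW])
  · intro α hα w hw s
    have hαw : (0 : Fin S → ℝ) ≤ α • w := fun i =>
      mul_nonneg (by linarith) (hw i)
    -- SINR (α•w) s relation
    have hkey : Real.log (1 + SINR w s) < α * Real.log (1 + SINR (α • w) s) := by
      have h1 : SINR w s < α * SINR (α • w) s := by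
        have hd1 := hden w hw s
        have hd2 := hden (α • w) hαw s
        have hsum2 : (∑ l, V l s * p l * (α • w) l) = α * ∑ l, V l s * p l * w l := by
          rw [Finset.mul_sum]; congr 1; ext l; simp [Pi.smul_apply]; ring
        have : SINR (α • w) s = p s / (α * (∑ l, V l s * p l * w l) + σ s) := by
          simp only [SINR, hsum2]
        have hd2' : 0 < α * (∑ l, V l s * p l * w l) + σ s := by
          nlinarith [hsum w hw s, hσ s]
        rw [this]
        simp only [SINR]
        rw [mul_div_assoc', div_lt_div_iff₀ hd1 hd2']
        nlinarith [hsum w hw s, mul_pos (hp s) (hσ s)]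
      have h2 : Real.log (1 + SINR w s) < Real.log (1 + α * SINR (α • w) s) := by
        apply Real.log_lt_log (by linarith [hSINR w hw s]) (by linarith)
      have h3 : Real.log (1 + α * SINR (α • w) s) ≤ α * Real.log (1 + SINR (α • w) s) := by
        have hb := one_add_mul_self_le_rpow_one_add
          (by linarith [hSINR (α • w) hαw s] : (-1:ℝ) ≤ SINR (α • w) s) hα.le
        calc Real.log (1 + α * SINR (α • w) s) ≤
            Real.log ((1 + SINR (α • w) s) ^ α) :=
              Real.log_le_log (by nlinarith [hSINR (α • w) hαw s]) hb
          _ = α * Real.log (1 + SINR (α • w) s) :=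
              Real.log_rpow (by linarith [hSINR (α • w) hαw s]) α
      linarith
    have hL1 := hlog w hw s
    have hL2 := hlog (α • w) hαw s
    rw [mul_div_assoc']
    rw [div_lt_div_iff₀ (by positivity) (by positivity)]
    nlinarith [mul_lt_mul_of_pos_left hkey (mul_pos (mul_pos hδ hW) (hd s))]
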